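/- Let S ⊆ R^d be a linear subspace and x an R^d-valued random variable with p := P[x ∉ S] ≥ ε > 0. Let Q be the conditional law of x given x ∉ S, and fix u ∈ S^⊥. Suppose that for n i.i.d. samples y_1,...,y_n from Q, the probability that u lies in Span(y_1^⊥, ..., y_n^⊥) is at least 1 − δ, where y^⊥ denotes orthogonal projection onto S^⊥. Set m := ⌈n/ε + 2√(log(1/δ)·n)/ε + 4·log(1/δ)/ε⌉ and let x_1,...,x_m be i.i.d. copies of x. Then P[u ∈ Span(x_1^⊥, ..., x_m^⊥)] ≥ 1 − 2δ. -/

import Mathlib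

open MeasureTheory ProbabilityTheory

set_option maxHeartbeats 1000000

lemma span_event_meas {d m : ℕ} (T : Submodule ℝ (EuclideanSpace ℝ (Fin d)))
    (u : EuclideanSpace ℝ (Fin d)) :
    MeasurableSet {x : Fin m → EuclideanSpace ℝ (Fin d) |
      u ∈ Submodule.span ℝ
        (Set.range fun i => (Submodule.orthogonalProjectionOnto T (x i) : EuclideanSpace ℝ (Fin d)))} := by
  classical
  set C : Set ((Fin m → EuclideanSpace ℝ (Fin d)) × (Fin m → ℝ)) :=
    {p | ∑ i, p.2 i • (Submodule.orthogonalProjectionOnto T (p.1 i) : EuclideanSpace ℝ (Fin d)) = u} with hC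
  have hCclosed : IsClosed C := by
    have hcont : Continuous fun p : (Fin m → EuclideanSpace ℝ (Fin d)) × (Fin m → ℝ) =>
        ∑ i, p.2 i • (Submodule.orthogonalProjectionOnto T (p.1 i) : EuclideanSpace ℝ (Fin d)) := by
      apply continuous_finset_sum
      intro i _
      exact ((continuous_apply i).comp continuous_snd).smul
        ((Submodule.orthogonalProjectionOnto T).continuous.comp ((continuous_apply i).comp continuous_fst)).subtype_val
    exact isClosed_eq hcont continuous_const
  have hset : {x : Fin m → EuclideanSpace ℝ (Fin d) |
      u ∈ Submodule.span ℝ (Set.range fun i => (Submodule.orthogonalProjectionOnto T (x i) : EuclideanSpace ℝ (Fin d)))}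
      = ⋃ k : ℕ, Prod.fst '' (C ∩ Metric.closedBall 0 k) := by
    ext x
    simp only [Set.mem_setOf_eq, Set.mem_iUnion, Set.mem_image]
    constructor
    · intro hx
      obtain ⟨c, hc⟩ := (Submodule.mem_span_range_iff_exists_fun ℝ).mp hx
      obtain ⟨k, hk⟩ := exists_nat_ge (‖((x, c) : (Fin m → EuclideanSpace ℝ (Fin d)) × (Fin m → ℝ))‖)
      exact ⟨k, (x, c), ⟨hc, by simpa [Metric.mem_closedBall, dist_zero_right] using hk⟩, rfl⟩
    · rintro ⟨k, ⟨y, c⟩, ⟨hc, -⟩, rfl⟩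
      exact (Submodule.mem_span_range_iff_exists_fun ℝ).mpr ⟨c, hc⟩
  rw [hset]
  refine MeasurableSet.iUnion fun k => ?_
  have hcpt : IsCompact (C ∩ Metric.closedBall 0 k) :=
    (isCompact_closedBall _ _).inter_left hCclosed
  exact (hcpt.image continuous_fst).isClosed.measurableSet

variable {E : Type*} [MeasurableSpace E]

lemma ite_prod_split {m : ℕ} (σ : Finset (Fin m)) (f g : Fin m → ENNReal) :
    ∏ i, (if i ∈ σ then f i else g i) =
      (∏ i ∈ σ, f i) * ∏ i ∈ Finset.univ \ σ, g i := by
  classical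
  rw [← Finset.prod_filter_mul_prod_filter_not Finset.univ (· ∈ σ)]
  congr 1
  · exact Finset.prod_congr (by ext i; simp) fun i hi => if_pos (by simpa using hi)
  · refine Finset.prod_congr (by ext i; simp) fun i hi => if_neg (by simpa using hi)

lemma pi_sum_decomp {m : ℕ} (μ : Measure E) [IsProbabilityMeasure μ]
    {S : Set E} (hS : MeasurableSet S) :
    Measure.pi (fun _ : Fin m => μ) =
      ∑ σ : Finset (Fin m), Measure.pi
        (fun i => if i ∈ σ then μ.restrict Sᶜ else μ.restrict S) := by
  classical
  haveI hsf : ∀ (σ : Finset (Fin m)) (i : Fin m),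
      SigmaFinite (if i ∈ σ then μ.restrict Sᶜ else μ.restrict S) := by
    intro σ i; split <;> infer_instance
  refine (Measure.pi_eq fun s hs => ?_)
  rw [Measure.coe_finset_sum]
  simp only [Finset.sum_apply]
  have hpp : ∀ σ : Finset (Fin m),
      (Measure.pi (fun i => if i ∈ σ then μ.restrict Sᶜ else μ.restrict S)) (Set.univ.pi s)
      = ∏ i, (if i ∈ σ then μ.restrict Sᶜ (s i) else μ.restrict S (s i)) := by
    intro σ
    rw [Measure.pi_pi]
    exact Finset.prod_congr rfl fun i _ => by split <;> rfl
  simp only [hpp]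
  have hsplit : ∀ i, μ (s i) = μ.restrict Sᶜ (s i) + μ.restrict S (s i) := by
    intro i
    rw [Measure.restrict_apply (hs i), Measure.restrict_apply (hs i), ← measure_union]
    · congr 1; rw [← Set.inter_union_distrib_left]; simp
    · exact Set.disjoint_left.mpr (fun x hx hx' => hx.2 hx'.2)
    · exact (hs i).inter hS
  simp only [hsplit]
  rw [Finset.prod_add, Finset.powerset_univ]
  exact Finset.sum_congr rfl fun σ _ => by rw [ite_prod_split]

variable {E : Type*} [MeasurableSpace E]

lemma nu_map_eq {m n : ℕ} (μ : Measure E) [IsProbabilityMeasure μ]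
    {S : Set E} (hS : MeasurableSet S) (hq0 : μ Sᶜ ≠ 0)
    (σ : Finset (Fin m)) (e : Fin n → Fin m) (he : Function.Injective e)
    (heσ : ∀ j, e j ∈ σ) {A : Set (Fin n → E)} (hA : MeasurableSet A) :
    Measure.pi (fun i : Fin m => if i ∈ σ then μ.restrict Sᶜ else μ.restrict S)
        ((fun x j => x (e j)) ⁻¹' A)
      = Measure.pi (fun i : Fin m => if i ∈ σ then μ.restrict Sᶜ else μ.restrict S) Set.univ
        * Measure.pi (fun _ : Fin n => μ[|Sᶜ]) A := by
  classical
  haveI hQ : IsProbabilityMeasure (μ[|Sᶜ]) := cond_isProbabilityMeasure hq0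
  set ν := Measure.pi (fun i : Fin m => if i ∈ σ then μ.restrict Sᶜ else μ.restrict S) with hν
  haveI hsf : ∀ (i : Fin m),
      SigmaFinite (if i ∈ σ then μ.restrict Sᶜ else μ.restrict S) := by
    intro i; split <;> infer_instance
  set W := ν Set.univ with hW
  set q := μ Sᶜ with hq
  have hrestrict : μ.restrict Sᶜ = q • (μ[|Sᶜ]) := by
    rw [ProbabilityTheory.cond, smul_smul, ENNReal.mul_inv_cancel hq0 (measure_ne_top μ _),
      one_smul]
  rcases eq_or_ne W 0 with hW0 | hW0
  · have h1 : ν ((fun x j => x (e j)) ⁻¹' A) = 0 :=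
      le_antisymm (hW0 ▸ measure_mono (Set.subset_univ _)) (zero_le)
    rw [h1, hW0, zero_mul]
  · have hWtop : W ≠ ⊤ := by
      refine ne_top_of_le_ne_top (measure_ne_top (Measure.pi fun _ : Fin m => μ) Set.univ) ?_
      rw [hW, hν, Measure.pi_univ, Measure.pi_univ]
      refine Finset.prod_le_prod' fun i _ => ?_
      split <;> exact Measure.restrict_apply_le _ _
    -- compute the mapped measure on boxes
    have hbox : ∀ s : Fin n → Set E, (∀ j, MeasurableSet (s j)) →
        ν ((fun (x : Fin m → E) j => x (e j)) ⁻¹' Set.univ.pi s)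
          = W * ∏ j, (μ[|Sᶜ]) (s j) := by
      intro s hs
      set g : Fin m → Set E := fun i => ⋂ j, ⋂ (_ : e j = i), s j with hg
      have hpre : ((fun (x : Fin m → E) j => x (e j)) ⁻¹' Set.univ.pi s) = Set.univ.pi g := by
        ext x
        simp only [Set.mem_preimage, Set.mem_pi, Set.mem_univ, true_implies, hg,
          Set.mem_iInter]
        constructor
        · rintro h i j rfl; exact h j
        · intro h j; exact h (e j) j rfl
      have hgmeas : ∀ i, MeasurableSet (g i) :=
        fun i => MeasurableSet.iInter fun j => MeasurableSet.iInter fun _ => hs j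
      rw [hpre, hν, Measure.pi_pi]
      set τ := Finset.image e Finset.univ with hτ
      have hgin : ∀ j, g (e j) = s j := by
        intro j
        apply le_antisymm
        · exact Set.iInter_subset_of_subset j (by simp)
        · refine Set.subset_iInter fun j' => Set.subset_iInter fun hj' => ?_
          rw [he hj']
      have hgout : ∀ i, i ∉ τ → g i = Set.univ := by
        intro i hi
        rw [hg]
        refine Set.eq_univ_of_forall fun x => ?_
        simp only [Set.mem_iInter]
        rintro j rfl
        exact absurd (Finset.mem_image_of_mem e (Finset.mem_univ j)) hi
      have hWsplit : W =
          (∏ i ∈ τ, (if i ∈ σ then μ.restrict Sᶜ else μ.restrict S) Set.univ)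
            * ∏ i ∈ τᶜ, (if i ∈ σ then μ.restrict Sᶜ else μ.restrict S) Set.univ := by
        rw [hW, hν, Measure.pi_univ, Finset.prod_mul_prod_compl]
      rw [← Finset.prod_mul_prod_compl τ]
      have hin : (∏ i ∈ τ, (if i ∈ σ then μ.restrict Sᶜ else μ.restrict S) (g i))
          = (∏ i ∈ τ, (if i ∈ σ then μ.restrict Sᶜ else μ.restrict S) Set.univ)
            * ∏ j, (μ[|Sᶜ]) (s j) := by
        rw [hτ, Finset.prod_image (fun a _ b _ h => he h),
          Finset.prod_image (fun a _ b _ h => he h), ← Finset.prod_mul_distrib]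
        refine Finset.prod_congr rfl fun j _ => ?_
        rw [hgin j, if_pos (heσ j), hrestrict]
        simp [Measure.smul_apply, mul_comm]
      have hout : (∏ i ∈ τᶜ, (if i ∈ σ then μ.restrict Sᶜ else μ.restrict S) (g i))
          = ∏ i ∈ τᶜ, (if i ∈ σ then μ.restrict Sᶜ else μ.restrict S) Set.univ := by
        refine Finset.prod_congr rfl fun i hi => ?_
        rw [hgout i (by simpa using hi)]
      rw [hin, hout, hWsplit]
      ring
    -- identify the normalized mapped measure with the product of conditionals
    have hmapmeas : Measurable fun (x : Fin m → E) (j : Fin n) => x (e j) :=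
      measurable_pi_lambda _ fun j => measurable_pi_apply (e j)
    have hmain : Measure.pi (fun _ : Fin n => μ[|Sᶜ])
        = W⁻¹ • ν.map (fun (x : Fin m → E) j => x (e j)) := by
      refine Measure.pi_eq fun s hs => ?_
      rw [Measure.smul_apply, Measure.map_apply hmapmeas
        (MeasurableSet.univ_pi fun j => hs j), hbox s hs, smul_eq_mul, ← mul_assoc,
        ENNReal.inv_mul_cancel hW0 hWtop, one_mul]
    have h2 : (Measure.pi fun _ : Fin n => μ[|Sᶜ]) A
        = W⁻¹ * ν ((fun (x : Fin m → E) j => x (e j)) ⁻¹' A) := by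
      rw [hmain, Measure.smul_apply, Measure.map_apply hmapmeas hA, smul_eq_mul]
    rw [h2, ← mul_assoc, ENNReal.mul_inv_cancel hW0 hWtop, one_mul]

lemma log_le_div_sqrt {x : ℝ} (hx : 0 ≤ x) :
    Real.sqrt (1 + x) * Real.log (1 + x) ≤ x := by
  set y := Real.log (1 + x) with hy
  have h1x : (0:ℝ) < 1 + x := by linarith
  have hyx : 1 + x = Real.exp y := (Real.exp_log h1x).symm
  have hy0 : 0 ≤ y := Real.log_nonneg (by linarith)
  have hsq : Real.sqrt (1 + x) = Real.exp (y/2) := by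
    rw [hyx, ← Real.exp_half]
  set z := y/2 with hz
  have hz0 : 0 ≤ z := by positivity
  set u := Real.exp z with hu
  have hPu : 1 + z + z^2/2 ≤ u := by
    have := Real.sum_le_exp_of_nonneg hz0 3
    simp [Finset.sum_range_succ, Nat.factorial] at this
    nlinarith [this]
  have hP2z : 2*z ≤ 1 + z + z^2/2 := by nlinarith [sq_nonneg (z - 1)]
  have hux : 1 + x = u^2 := by
    rw [hyx, hu, ← Real.exp_nat_mul]
    norm_num
    rw [hz]
    ring_nf
  have key : u * y ≤ u^2 - 1 := by
    have : y = 2*z := by rw [hz]; ring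
    rw [this]
    nlinarith [mul_nonneg (sub_nonneg.2 hPu)
      (by nlinarith : (0:ℝ) ≤ u + (1 + z + z^2/2) - 2*z)]
  rw [hsq]
  linarith [key]

lemma chernoff_tail (n m : ℕ) (hn : 0 < n) (r L : ℝ) (hr1 : r ≤ 1) (hL : 0 ≤ L)
    (hm : (n : ℝ) + 2*Real.sqrt (L*n) + 4*L ≤ m * r) :
    ∑ k ∈ Finset.range n, (m.choose k : ℝ) * r^k * (1-r)^(m-k) ≤ Real.exp (-L) := by
  have hc0 : 0 ≤ Real.sqrt (L*n) := Real.sqrt_nonneg _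
  have hnpos : (0:ℝ) < n := by exact_mod_cast hn
  have hna : (n:ℝ) ≤ m * r := by linarith
  have hr0 : 0 < r := by
    rcases le_or_gt r 0 with h | h
    · nlinarith [mul_nonpos_of_nonneg_of_nonpos (by positivity : (0:ℝ) ≤ (m:ℝ)) h]
    · exact h
  set a := (m:ℝ) * r with ha
  have hapos : 0 < a := lt_of_lt_of_le hnpos hna
  set t := a / n with ht
  have ht1 : 1 ≤ t := (one_le_div hnpos).mpr hna
  have htpos : 0 < t := lt_of_lt_of_le one_pos ht1
  have hnm : n ≤ m := by
    have : (n:ℝ) ≤ (m:ℝ) := by nlinarith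
    exact_mod_cast this
  have hat : a / t = n := by
    rw [ht]
    field_simp
  clear_value a t
  -- step 1: pad with the exponential tilt
  have hr1' : (0:ℝ) ≤ 1 - r := by linarith
  have step1a : ∀ k ∈ Finset.range n, (m.choose k : ℝ) * r^k * (1-r)^(m-k)
      ≤ (m.choose k : ℝ) * ((r/t)^k * (1-r)^(m-k) * t^n) := by
    intro k hk
    have hkn : k < n := Finset.mem_range.mp hk
    have h1 : (r/t)^k * t^n = r^k * t^(n-k) := by
      rw [div_pow, div_mul_eq_mul_div, ← Real.rpow_natCast t n, ← Real.rpow_natCast t k,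
        ← Real.rpow_natCast t (n-k), mul_div_assoc, ← Real.rpow_sub htpos]
      congr 2
      have : (k:ℝ) ≤ n := by exact_mod_cast hkn.le
      push_cast [Nat.cast_sub hkn.le]
      ring
    have h2 : (1:ℝ) ≤ t^(n-k) := one_le_pow₀ ht1
    calc (m.choose k : ℝ) * r^k * (1-r)^(m-k)
        ≤ (m.choose k : ℝ) * r^k * (1-r)^(m-k) * t^(n-k) := by
          nlinarith [mul_nonneg (mul_nonneg (by positivity : (0:ℝ) ≤ (m.choose k : ℝ)) (by positivity : (0:ℝ) ≤ r^k)) (by positivity : (0:ℝ) ≤ (1-r)^(m-k))]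
      _ = (m.choose k : ℝ) * ((r/t)^k * (1-r)^(m-k) * t^n) := by
          rw [mul_comm ((r/t)^k) _, mul_assoc ((1-r)^(m-k))]
          rw [h1]
          ring
  have step1 : ∑ k ∈ Finset.range n, (m.choose k : ℝ) * r^k * (1-r)^(m-k)
      ≤ ∑ k ∈ Finset.range (m+1), (m.choose k : ℝ) * ((r/t)^k * (1-r)^(m-k) * t^n) := by
    refine (Finset.sum_le_sum step1a).trans ?_
    refine Finset.sum_le_sum_of_subset_of_nonneg (Finset.range_subset_range.mpr (by omega))
      (fun k _ _ => ?_)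
    have : (0:ℝ) ≤ (1-r)^(m-k) := by positivity
    positivity
  -- step 2: binomial theorem
  have step2 : ∑ k ∈ Finset.range (m+1), (m.choose k : ℝ) * ((r/t)^k * (1-r)^(m-k) * t^n)
      = (r/t + (1-r))^m * t^n := by
    rw [add_pow, Finset.sum_mul]
    refine Finset.sum_congr rfl fun k _ => by ring
  -- step 3: 1 + x ≤ exp x
  have hbase : 0 ≤ r/t + (1-r) := by
    have : (0:ℝ) ≤ r/t := by positivity
    linarith
  have step3 : (r/t + (1-r))^m ≤ Real.exp (n - a) := by
    have h1 : r/t + (1-r) ≤ Real.exp (r/t - r) := by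
      have := Real.add_one_le_exp (r/t - r)
      linarith
    calc (r/t + (1-r))^m ≤ (Real.exp (r/t - r))^m := pow_le_pow_left₀ hbase h1 m
      _ = Real.exp (m * (r/t - r)) := by rw [← Real.exp_nat_mul]
      _ = Real.exp (n - a) := by
          congr 1
          have : (m:ℝ) * (r/t) = a/t := by rw [ha]; ring
          rw [mul_sub, this, hat, ha]
  -- step 4: final log computation
  have step4 : Real.exp (n - a) * t^n ≤ Real.exp (-L) := by
    set s := a - n with hs
    have hsT : 2*Real.sqrt (L*n) + 4*L ≤ s := by rw [hs]; linarith
    clear_value s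
    have hs0 : 0 ≤ s := by nlinarith
    have hts : t = 1 + s/n := by rw [ht, hs]; field_simp; ring
    have hlog : Real.sqrt (1 + s/n) * Real.log (1 + s/n) ≤ s/n :=
      log_le_div_sqrt (by positivity)
    -- translate to sqrt(n+s)
    set A := Real.sqrt (n + s) with hA
    set B := Real.sqrt (n:ℝ) with hB
    have hA2 : A^2 = n + s := Real.sq_sqrt (by positivity)
    have hB2 : B^2 = (n:ℝ) := Real.sq_sqrt (by positivity)
    have hBpos : 0 < B := Real.sqrt_pos.mpr hnpos
    have hApos : 0 < A := Real.sqrt_pos.mpr (by positivity)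
    have hBA : B ≤ A := Real.sqrt_le_sqrt (by linarith)
    clear_value A B
    have hsqrt : Real.sqrt (1 + s/n) = A / B := by
      rw [hA, hB, ← Real.sqrt_div' _ ?pos]
      · congr 1
        field_simp
      case pos => positivity
    have hcsq : Real.sqrt (L*n) ^ 2 = L * n := Real.sq_sqrt (by positivity)
    have hnlog : (n:ℝ) * Real.log t ≤ s * B / A := by
      rw [hts]
      have h2 : Real.log (1 + s/n) ≤ (s/n) * (B/A) := by
        rw [hsqrt] at hlog
        have hABpos : 0 < A / B := by positivity
        calc Real.log (1 + s/n) ≤ (s/n) / (A/B) := by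
              rw [le_div_iff₀ hABpos]
              linarith [hlog]
          _ = (s/n) * (B/A) := by field_simp
      calc (n:ℝ) * Real.log (1 + s/n) ≤ (n:ℝ) * ((s/n) * (B/A)) := by
            exact mul_le_mul_of_nonneg_left h2 (le_of_lt hnpos)
        _ = s * B / A := by field_simp
    -- key quadratic inequality
    have hquad : L * A ≤ s * (A - B) := by
      have hc := hcsq
      have h2 : s^2 ≥ 2*L*(n+s) := by
        nlinarith [hc, hsT, hL, hc0, mul_nonneg hL hc0,
          mul_nonneg (sub_nonneg.2 hsT) (by nlinarith : (0:ℝ) ≤ s + (2*Real.sqrt (L*n) + 4*L) - 2*L)]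
      have h1 : s^2 ≥ L * (A^2 + A*B) := by
        have hAB : A * B ≤ A^2 := by nlinarith
        nlinarith
      have h3 : s * (A - B) * (A + B) = s^2 := by nlinarith
      nlinarith [mul_pos hApos (by linarith : (0:ℝ) < A + B)]
    have hfinal : (n:ℝ) * Real.log t + (n - a) ≤ -L := by
      have h4 : s * B / A ≤ s - L := by
        rw [div_le_iff₀ hApos]
        have e1 : (s-L)*A = s*A - L*A := by ring
        have e2 : s*(A-B) = s*A - s*B := by ring
        rw [e2] at hquad
        linarith [hquad]
      have := hnlog.trans h4
      rw [hs] at this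
      linarith
    have htn : t ^ n = Real.exp (Real.log t * n) := by
      rw [← Real.rpow_natCast t n, Real.rpow_def_of_pos htpos]
    calc Real.exp (n - a) * t^n = Real.exp ((n - a) + Real.log t * n) := by
          rw [Real.exp_add, htn]
      _ ≤ Real.exp (-L) := Real.exp_le_exp.mpr (by linarith [hfinal])
  calc ∑ k ∈ Finset.range n, (m.choose k : ℝ) * r^k * (1-r)^(m-k)
      ≤ (r/t + (1-r))^m * t^n := step1.trans (le_of_eq step2)
    _ ≤ Real.exp (n - a) * t^n := by
        exact mul_le_mul_of_nonneg_right step3 (by positivity)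
    _ ≤ Real.exp (-L) := step4

lemma card_sum_bound (m n : ℕ) (r δ : ℝ) (hr0 : 0 ≤ r) (hr1 : r ≤ 1)
    (htail : ∑ k ∈ Finset.range n, (m.choose k : ℝ) * r^k * (1-r)^(m-k) ≤ δ) :
    1 - δ ≤ ∑ σ ∈ Finset.univ.filter (fun σ : Finset (Fin m) => n ≤ σ.card),
      r^(σ.card) * (1-r)^(m - σ.card) := by
  classical
  have hterm : ∀ σ : Finset (Fin m), (0:ℝ) ≤ r^(σ.card) * (1-r)^(m - σ.card) :=
    fun σ => mul_nonneg (pow_nonneg hr0 _) (pow_nonneg (by linarith) _)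
  have htotal : ∑ σ : Finset (Fin m), r^(σ.card) * (1-r)^(m - σ.card) = 1 := by
    have := Finset.prod_add (fun _ : Fin m => r) (fun _ : Fin m => 1 - r) Finset.univ
    simp only [Finset.prod_const, Finset.powerset_univ] at this
    have h2 : ∀ σ : Finset (Fin m), (Finset.univ \ σ).card = m - σ.card := by
      intro σ
      rw [Finset.card_sdiff_of_subset (Finset.subset_univ σ), Finset.card_univ, Fintype.card_fin]
    calc ∑ σ : Finset (Fin m), r^(σ.card) * (1-r)^(m - σ.card)
        = ∑ σ : Finset (Fin m), r^(σ.card) * (1-r)^((Finset.univ \ σ).card) := by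
          refine Finset.sum_congr rfl fun σ _ => by rw [h2]
      _ = (r + (1-r))^m := by
          rw [← this, Finset.card_univ, Fintype.card_fin]
      _ = 1 := by norm_num
  have hsplit : (∑ σ ∈ Finset.univ.filter (fun σ : Finset (Fin m) => n ≤ σ.card),
        r^(σ.card) * (1-r)^(m - σ.card))
      + (∑ σ ∈ Finset.univ.filter (fun σ : Finset (Fin m) => ¬ n ≤ σ.card),
        r^(σ.card) * (1-r)^(m - σ.card)) = 1 := by
    rw [Finset.sum_filter_add_sum_filter_not, htotal]
  have hlow : ∑ σ ∈ Finset.univ.filter (fun σ : Finset (Fin m) => ¬ n ≤ σ.card),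
      r^(σ.card) * (1-r)^(m - σ.card) ≤ δ := by
    refine le_trans (le_of_eq ?_) htail
    have hbi : Finset.univ.filter (fun σ : Finset (Fin m) => ¬ n ≤ σ.card)
        = (Finset.range n).biUnion (fun k => Finset.powersetCard k Finset.univ) := by
      ext σ
      simp only [Finset.mem_filter, Finset.mem_univ, true_and, Finset.mem_biUnion,
        Finset.mem_range, Finset.mem_powersetCard, not_le]
      constructor
      · intro h; exact ⟨σ.card, h, Finset.subset_univ σ, rfl⟩
      · rintro ⟨k, hk, -, rfl⟩; exact hk
    have hdisj : Set.PairwiseDisjoint ↑(Finset.range n)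
        (fun k => Finset.powersetCard k (Finset.univ : Finset (Fin m))) := by
      intro k₁ _ k₂ _ hk
      simp only [Function.onFun]
      refine Finset.disjoint_left.mpr fun σ h1 h2 => ?_
      rw [Finset.mem_powersetCard] at h1 h2
      exact hk (h1.2 ▸ h2.2.symm ▸ rfl)
    rw [hbi, Finset.sum_biUnion hdisj]
    refine Finset.sum_congr rfl fun k _ => ?_
    have : ∀ σ ∈ Finset.powersetCard k (Finset.univ : Finset (Fin m)),
        r^(σ.card) * (1-r)^(m - σ.card) = r^k * (1-r)^(m-k) := by
      intro σ hσ
      rw [(Finset.mem_powersetCard.mp hσ).2]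
    rw [Finset.sum_congr rfl this, Finset.sum_const, Finset.card_powersetCard,
      Finset.card_univ, Fintype.card_fin, nsmul_eq_mul]
    ring
  linarith

/-- Boosting a conditional spanning guarantee by oversampling. Let `S` be a
linear subspace of `ℝ^d`, `x ~ μ` with `P[x ∉ S] ≥ ε`, `Q = Law(x | x ∉ S)`, and fix
`u ∈ S^⊥`. If the probability that `u` lies in the span of the orthogonal projections
onto `S^⊥` of `n` i.i.d. `Q`-samples is at least `1 − δ`, then with
`m = ⌈n/ε + 2√(log(1/δ)·n)/ε + 4·log(1/δ)/ε⌉` i.i.d. copies of `x`, the probability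
that `u` lies in the span of their projections is at least `1 − 2δ`. -/
theorem stmt9 (d n : ℕ) (hn : 0 < n) (ε δ : ℝ)
    (hε : ε ∈ Set.Ioo (0 : ℝ) 1) (hδ : δ ∈ Set.Ioo (0 : ℝ) 1)
    (μ : Measure (EuclideanSpace ℝ (Fin d))) [IsProbabilityMeasure μ]
    (S : Submodule ℝ (EuclideanSpace ℝ (Fin d)))
    (hp : ENNReal.ofReal ε ≤ μ ((S : Set (EuclideanSpace ℝ (Fin d)))ᶜ))
    (u : EuclideanSpace ℝ (Fin d)) (hu : u ∈ Sᗮ)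
    (hyp : 1 - ENNReal.ofReal δ ≤
      (Measure.pi fun _ : Fin n => μ[|(S : Set (EuclideanSpace ℝ (Fin d)))ᶜ])
        {y | u ∈ Submodule.span ℝ
          (Set.range fun i => (Submodule.orthogonalProjectionOnto Sᗮ (y i) : EuclideanSpace ℝ (Fin d)))}) :
    1 - ENNReal.ofReal (2 * δ) ≤
      (Measure.pi fun _ :
          Fin (⌈n / ε + 2 * Real.sqrt (Real.log (1 / δ) * n) / ε
                + 4 * Real.log (1 / δ) / ε⌉₊) => μ)
        {x | u ∈ Submodule.span ℝ
          (Set.range fun i => (Submodule.orthogonalProjectionOnto Sᗮ (x i) : EuclideanSpace ℝ (Fin d)))} := by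
  classical
  obtain ⟨hε0, hε1⟩ := hε
  obtain ⟨hδ0, hδ1⟩ := hδ
  set L : ℝ := Real.log (1 / δ) with hLdef
  have hL0 : 0 ≤ L := Real.log_nonneg ((le_div_iff₀ hδ0).mpr (by linarith))
  set m : ℕ := ⌈n / ε + 2 * Real.sqrt (L * n) / ε + 4 * L / ε⌉₊ with hmdef
  set Sset : Set (EuclideanSpace ℝ (Fin d)) := (S : Set (EuclideanSpace ℝ (Fin d))) with hSset
  have hSmeas : MeasurableSet Sset := (Submodule.closed_of_finiteDimensional S).measurableSet
  have hq0 : μ Ssetᶜ ≠ 0 := by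
    intro h
    rw [h] at hp
    exact absurd (le_antisymm hp (zero_le)) (by simp [ENNReal.ofReal_eq_zero]; linarith)
  -- the real mass outside S
  set r : ℝ := (μ Ssetᶜ).toReal with hrdef
  have hqne : μ Ssetᶜ ≠ ⊤ := measure_ne_top μ _
  have hq1 : μ Ssetᶜ ≤ 1 := prob_le_one
  have hr1 : r ≤ 1 := by
    rw [hrdef]
    exact ENNReal.toReal_le_of_le_ofReal one_pos.le (by simpa using hq1)
  have hrε : ε ≤ r := by
    have := ENNReal.toReal_mono hqne hp
    rwa [ENNReal.toReal_ofReal hε0.le] at this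
  have hr0 : 0 < r := lt_of_lt_of_le hε0 hrε
  have hqr : μ Ssetᶜ = ENNReal.ofReal r := (ENNReal.ofReal_toReal hqne).symm
  have hqS : μ Sset = ENNReal.ofReal (1 - r) := by
    have hcc : μ Sset = 1 - μ Ssetᶜ := by
      rw [prob_compl_eq_one_sub hSmeas, ENNReal.sub_sub_cancel ENNReal.one_ne_top prob_le_one]
    rw [hcc, hqr, ← ENNReal.ofReal_one, ← ENNReal.ofReal_sub _ (by linarith)]
  -- the chernoff bound
  have hmge : (n : ℝ) + 2 * Real.sqrt (L * n) + 4 * L ≤ m * r := by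
    have h1 : n / ε + 2 * Real.sqrt (L * n) / ε + 4 * L / ε ≤ (m : ℝ) := Nat.le_ceil _
    have h2 : (n / ε + 2 * Real.sqrt (L * n) / ε + 4 * L / ε) * ε ≤ (m : ℝ) * ε :=
      mul_le_mul_of_nonneg_right h1 hε0.le
    have h3 : (n / ε + 2 * Real.sqrt (L * n) / ε + 4 * L / ε) * ε
        = (n : ℝ) + 2 * Real.sqrt (L * n) + 4 * L := by
      field_simp
    have h4 : (m : ℝ) * ε ≤ m * r := mul_le_mul_of_nonneg_left hrε (by positivity)
    linarith
  have htail : ∑ k ∈ Finset.range n, (m.choose k : ℝ) * r^k * (1-r)^(m-k) ≤ δ := by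
    have := chernoff_tail n m hn r L hr1 hL0 hmge
    have hexp : Real.exp (-L) = δ := by
      rw [hLdef, one_div, Real.log_inv, neg_neg, Real.exp_log hδ0]
    linarith
  -- decompose the product measure
  set Em : Set (Fin m → EuclideanSpace ℝ (Fin d)) :=
    {x | u ∈ Submodule.span ℝ
      (Set.range fun i => (Submodule.orthogonalProjectionOnto Sᗮ (x i) : EuclideanSpace ℝ (Fin d)))} with hEm
  have hEmmeas : MeasurableSet Em := span_event_meas Sᗮ u
  set ν : Finset (Fin m) → Measure (Fin m → EuclideanSpace ℝ (Fin d)) :=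
    fun σ => Measure.pi (fun i => if i ∈ σ then μ.restrict Ssetᶜ else μ.restrict Sset) with hν
  haveI hsf : ∀ (σ : Finset (Fin m)) (i : Fin m),
      SigmaFinite (if i ∈ σ then μ.restrict Ssetᶜ else μ.restrict Sset) := by
    intro σ i; split <;> infer_instance
  have hdecomp : (Measure.pi fun _ : Fin m => μ) Em = ∑ σ : Finset (Fin m), ν σ Em := by
    rw [pi_sum_decomp μ hSmeas, Measure.coe_finset_sum, Finset.sum_apply]
  -- per-pattern lower bound
  set T : Finset (Finset (Fin m)) :=
    Finset.univ.filter (fun σ : Finset (Fin m) => n ≤ σ.card) with hT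
  have hper : ∀ σ ∈ T, (1 - ENNReal.ofReal δ) * ν σ Set.univ ≤ ν σ Em := by
    intro σ hσ
    have hcard : n ≤ σ.card := (Finset.mem_filter.mp hσ).2
    set e : Fin n → Fin m := fun j => σ.orderEmbOfFin rfl (Fin.castLE hcard j) with he
    have heinj : Function.Injective e :=
      (σ.orderEmbOfFin rfl).injective.comp (Fin.castLE_injective hcard)
    have heσ : ∀ j, e j ∈ σ := fun j => Finset.orderEmbOfFin_mem σ rfl _
    set En : Set (Fin n → EuclideanSpace ℝ (Fin d)) :=
      {y | u ∈ Submodule.span ℝ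
        (Set.range fun j => (Submodule.orthogonalProjectionOnto Sᗮ (y j) : EuclideanSpace ℝ (Fin d)))} with hEn
    have hEnmeas : MeasurableSet En := span_event_meas Sᗮ u
    have hsubset : (fun (x : Fin m → EuclideanSpace ℝ (Fin d)) j => x (e j)) ⁻¹' En ⊆ Em := by
      intro x hx
      refine Submodule.span_mono ?_ hx
      rintro v ⟨j, rfl⟩
      exact ⟨e j, rfl⟩
    have hmap := nu_map_eq μ hSmeas hq0 σ e heinj heσ hEnmeas
    calc (1 - ENNReal.ofReal δ) * ν σ Set.univ
        ≤ (Measure.pi fun _ : Fin n => μ[|Ssetᶜ]) En * ν σ Set.univ := by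
          exact mul_le_mul_left hyp _
      _ = ν σ Set.univ * (Measure.pi fun _ : Fin n => μ[|Ssetᶜ]) En := mul_comm _ _
      _ = ν σ ((fun (x : Fin m → EuclideanSpace ℝ (Fin d)) j => x (e j)) ⁻¹' En) := hmap.symm
      _ ≤ ν σ Em := measure_mono hsubset
  -- total mass of good patterns
  have hνuniv : ∀ σ : Finset (Fin m), ν σ Set.univ
      = ENNReal.ofReal (r^(σ.card) * (1-r)^(m - σ.card)) := by
    intro σ
    rw [hν]
    simp only
    rw [Measure.pi_univ]
    have : ∀ i : Fin m, (if i ∈ σ then μ.restrict Ssetᶜ else μ.restrict Sset) Set.univ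
        = if i ∈ σ then ENNReal.ofReal r else ENNReal.ofReal (1-r) := by
      intro i
      split <;> simp [Measure.restrict_apply, hqr, hqS]
    rw [Finset.prod_congr rfl fun i _ => this i, ite_prod_split, Finset.prod_const,
      Finset.prod_const, Finset.card_sdiff_of_subset (Finset.subset_univ σ), Finset.card_univ,
      Fintype.card_fin, ← ENNReal.ofReal_pow (by linarith), ← ENNReal.ofReal_pow (by linarith),
      ← ENNReal.ofReal_mul (by positivity)]
  have hWlow : 1 - ENNReal.ofReal δ ≤ ∑ σ ∈ T, ν σ Set.univ := by
    have hreal := card_sum_bound m n r δ hr0.le hr1 htail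
    calc 1 - ENNReal.ofReal δ ≤ ENNReal.ofReal (1 - δ) := by
          rw [← ENNReal.ofReal_one, ← ENNReal.ofReal_sub _ hδ0.le]
      _ ≤ ENNReal.ofReal (∑ σ ∈ T, r^(σ.card) * (1-r)^(m - σ.card)) :=
          ENNReal.ofReal_le_ofReal hreal
      _ = ∑ σ ∈ T, ENNReal.ofReal (r^(σ.card) * (1-r)^(m - σ.card)) :=
          ENNReal.ofReal_sum_of_nonneg fun σ _ =>
            mul_nonneg (by positivity) (pow_nonneg (by linarith) _)
      _ = ∑ σ ∈ T, ν σ Set.univ := by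
          exact Finset.sum_congr rfl fun σ _ => (hνuniv σ).symm
  -- put everything together
  have hmain : (1 - ENNReal.ofReal δ) * (1 - ENNReal.ofReal δ)
      ≤ (Measure.pi fun _ : Fin m => μ) Em := by
    rw [hdecomp]
    calc (1 - ENNReal.ofReal δ) * (1 - ENNReal.ofReal δ)
        ≤ (1 - ENNReal.ofReal δ) * ∑ σ ∈ T, ν σ Set.univ := mul_le_mul_right hWlow _
      _ = ∑ σ ∈ T, (1 - ENNReal.ofReal δ) * ν σ Set.univ := Finset.mul_sum _ _ _
      _ ≤ ∑ σ ∈ T, ν σ Em := Finset.sum_le_sum hper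
      _ ≤ ∑ σ : Finset (Fin m), ν σ Em :=
          Finset.sum_le_sum_of_subset (Finset.filter_subset _ _)
  refine le_trans ?_ hmain
  have h1 : (1:ENNReal) - ENNReal.ofReal δ = ENNReal.ofReal (1 - δ) := by
    rw [← ENNReal.ofReal_one, ← ENNReal.ofReal_sub _ hδ0.le]
  rw [h1, ← ENNReal.ofReal_mul (by linarith), ← ENNReal.ofReal_one,
    ← ENNReal.ofReal_sub _ (by linarith)]
  exact ENNReal.ofReal_le_ofReal (by nlinarith)
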